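/- The number of weights μ in the root lattice of sl_n that are strictly dominant relative to the l-dilated fundamental alcove, i.e., dominant integral weights in the root lattice with ⟨μ + ρ, θ∨⟩ < l (θ the highest root), equals the rational Catalan number c_{l−n,n} = (1/l)·binomial(l, n), for l coprime to n and l ≥ n+1. -/

import Mathlib

open Finset

open Finset

section Lift
variable (l : ℕ) [NeZero l]

/-- The unique integer in `[s, s+l)` congruent to `r` mod `l`. -/
def zlift (s : ℤ) (r : ZMod l) : ℤ := s + ((r - (s : ZMod l)).val : ℤ)

lemma zlift_cast (s : ℤ) (r : ZMod l) : ((zlift l s r : ℤ) : ZMod l) = r := by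
  have : (((r - (s : ZMod l)).val : ℕ) : ZMod l) = r - (s : ZMod l) :=
    ZMod.natCast_rightInverse _
  simp [zlift, this]

lemma zlift_le (s : ℤ) (r : ZMod l) : s ≤ zlift l s r :=
  le_add_of_nonneg_right (Int.ofNat_nonneg _)

lemma zlift_lt (s : ℤ) (r : ZMod l) : zlift l s r < s + l := by
  have := ZMod.val_lt (r - (s : ZMod l))
  simp only [zlift]
  omega

lemma cast_eq_cast_iff_dvd (a b : ℤ) : ((a : ZMod l) = (b : ZMod l)) ↔ (l : ℤ) ∣ (a - b) := by
  rw [ZMod.intCast_eq_intCast_iff, Int.modEq_iff_dvd]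
  exact dvd_sub_comm

lemma zlift_unique {s t : ℤ} {r : ZMod l} (h1 : s ≤ t) (h2 : t < s + l)
    (h3 : ((t : ℤ) : ZMod l) = r) : zlift l s r = t := by
  have hc : ((zlift l s r : ℤ) : ZMod l) = ((t : ℤ) : ZMod l) := by rw [zlift_cast, h3]
  have hd : (l : ℤ) ∣ (zlift l s r - t) := (cast_eq_cast_iff_dvd l _ _).1 hc
  have h4 := zlift_le l s r
  have h5 := zlift_lt l s r
  have hl0 : 0 < (l : ℤ) := by exact_mod_cast Nat.pos_of_ne_zero (NeZero.ne l)
  obtain ⟨k, hk⟩ := hd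
  have hk1 : k < 1 := lt_of_mul_lt_mul_left (by linarith) hl0.le
  have hk2 : -1 < k := lt_of_mul_lt_mul_left (by linarith) hl0.le
  have hk0 : k = 0 := by omega
  rw [hk0, mul_zero] at hk
  omega

lemma zlift_mono {s s' : ℤ} (h : s ≤ s') (r : ZMod l) : zlift l s r ≤ zlift l s' r := by
  have hc : ((zlift l s r : ℤ) : ZMod l) = ((zlift l s' r : ℤ) : ZMod l) := by
    rw [zlift_cast, zlift_cast]
  obtain ⟨k, hk⟩ := (cast_eq_cast_iff_dvd l _ _).1 hc
  have h4 := zlift_le l s' r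
  have h5 := zlift_lt l s r
  have hl0 : 0 < (l : ℤ) := by exact_mod_cast Nat.pos_of_ne_zero (NeZero.ne l)
  have hk1 : k < 1 := lt_of_mul_lt_mul_left (by linarith) hl0.le
  nlinarith

lemma zlift_jump {s s' : ℤ} {r : ZMod l} (h : zlift l s r < s') :
    zlift l s r + l ≤ zlift l s' r := by
  have hc : ((zlift l s' r : ℤ) : ZMod l) = ((zlift l s r : ℤ) : ZMod l) := by
    rw [zlift_cast, zlift_cast]
  obtain ⟨k, hk⟩ := (cast_eq_cast_iff_dvd l _ _).1 hc
  have h4 := zlift_le l s' r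
  have hl0 : 0 < (l : ℤ) := by exact_mod_cast Nat.pos_of_ne_zero (NeZero.ne l)
  have hk1 : 0 < k := lt_of_mul_lt_mul_left (by linarith) hl0.le
  nlinarith

lemma zlift_succ (s : ℤ) (r : ZMod l) :
    zlift l (s + 1) r = if ((s : ℤ) : ZMod l) = r then zlift l s r + l else zlift l s r := by
  have hl0 : 0 < (l : ℤ) := by exact_mod_cast Nat.pos_of_ne_zero (NeZero.ne l)
  split_ifs with h
  · have hs : zlift l s r = s := zlift_unique l le_rfl (by linarith) h
    apply zlift_unique
    · omega
    · omega
    · push_cast [zlift_cast, ZMod.natCast_self]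
      simp
  · apply zlift_unique
    · have h4 := zlift_le l s r
      rcases eq_or_lt_of_le h4 with he | hlt
      · exact absurd (he ▸ zlift_cast l s r) h
      · omega
    · have := zlift_lt l s r; omega
    · exact zlift_cast l s r

lemma zlift_add_nat (s : ℤ) (r : ZMod l) : zlift l (s + l) r = zlift l s r + l := by
  apply zlift_unique
  · have := zlift_le l s r; omega
  · have := zlift_lt l s r; omega
  · push_cast [zlift_cast]; simp

end Lift

set_option linter.unusedSectionVars false

section Fsum
variable (l : ℕ) [NeZero l]

/-- Sum of the lifts in `[s, s+l)` of the elements of `A`. -/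
def Fsum (s : ℤ) (A : Finset (ZMod l)) : ℤ := ∑ r ∈ A, zlift l s r

lemma Fsum_succ (s : ℤ) (A : Finset (ZMod l)) :
    Fsum l (s + 1) A = Fsum l s A + if ((s : ℤ) : ZMod l) ∈ A then (l : ℤ) else 0 := by
  unfold Fsum
  have : ∀ r ∈ A, zlift l (s + 1) r = zlift l s r + if ((s : ℤ) : ZMod l) = r then (l : ℤ) else 0 := by
    intro r _
    rw [zlift_succ]
    split_ifs <;> simp
  rw [Finset.sum_congr rfl this, Finset.sum_add_distrib, Finset.sum_ite_eq A ((s : ℤ) : ZMod l) (fun _ => (l:ℤ))]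

lemma Fsum_mono {s t : ℤ} (h : s ≤ t) (A : Finset (ZMod l)) : Fsum l s A ≤ Fsum l t A :=
  Finset.sum_le_sum fun r _ => zlift_mono l h r

lemma Fsum_step (s : ℤ) (A : Finset (ZMod l)) : Fsum l (s + 1) A ≤ Fsum l s A + l := by
  rw [Fsum_succ]
  split_ifs <;> simp [Int.ofNat_nonneg]

lemma Fsum_add_l (s : ℤ) (A : Finset (ZMod l)) :
    Fsum l (s + l) A = Fsum l s A + l * A.card := by
  unfold Fsum
  rw [Finset.sum_congr rfl fun r _ => zlift_add_nat l s r, Finset.sum_add_distrib]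
  simp [mul_comm]

lemma Fsum_add_mul (s : ℤ) (A : Finset (ZMod l)) (k : ℕ) :
    Fsum l (s + k * l) A = Fsum l s A + k * l * A.card := by
  induction k with
  | zero => simp
  | succ k ih =>
    have : s + ((k : ℤ) + 1) * l = (s + k * l) + l := by ring
    push_cast
    rw [this, Fsum_add_l, ih]
    ring

lemma Fsum_cast (s : ℤ) (A : Finset (ZMod l)) :
    ((Fsum l s A : ℤ) : ZMod l) = ∑ r ∈ A, r := by
  unfold Fsum
  push_cast
  exact Finset.sum_congr rfl fun r _ => zlift_cast l s r

lemma exists_Fsum_eq {A : Finset (ZMod l)} (hA : 0 < A.card) {N : ℤ}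
    (hN : ((N : ℤ) : ZMod l) = ∑ r ∈ A, r) : ∃ s : ℤ, Fsum l s A = N := by
  have hl0 : 0 < (l : ℤ) := by exact_mod_cast Nat.pos_of_ne_zero (NeZero.ne l)
  have hcard : (1 : ℤ) ≤ A.card := by exact_mod_cast hA
  -- find s0 with Fsum s0 ≤ N
  set k0 : ℕ := (Fsum l 0 A - N).toNat with hk0
  set s0 : ℤ := 0 - k0 * l with hs0
  have hFs0 : Fsum l s0 A ≤ N := by
    have := Fsum_add_mul l s0 A k0
    have hs0l : s0 + k0 * l = 0 := by rw [hs0]; ring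
    rw [hs0l] at this
    have hk0ge : (k0 : ℤ) ≥ Fsum l 0 A - N := Int.self_le_toNat _
    have hk0nn : (0:ℤ) ≤ (k0 : ℤ) := Int.ofNat_nonneg _
    have hl1 : (1:ℤ) ≤ (l : ℤ) := by omega
    have h1 : (k0:ℤ) * 1 ≤ (k0:ℤ) * l := mul_le_mul_of_nonneg_left hl1 hk0nn
    have h2 : ((k0:ℤ) * l) * 1 ≤ ((k0:ℤ) * l) * A.card :=
      mul_le_mul_of_nonneg_left hcard (by nlinarith)
    nlinarith
  -- find k with N < Fsum (s0 + k)
  have hexists : ∃ k : ℕ, N < Fsum l (s0 + k) A := by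
    refine ⟨((N - Fsum l s0 A).toNat + 1) * l, ?_⟩
    set k1 : ℕ := (N - Fsum l s0 A).toNat + 1 with hk1
    have : ((k1 * l : ℕ) : ℤ) = (k1 : ℤ) * l := by push_cast; ring
    rw [this, Fsum_add_mul]
    have hk1ge : (k1 : ℤ) ≥ N - Fsum l s0 A + 1 := by
      have := Int.self_le_toNat (N - Fsum l s0 A); push_cast [hk1]; omega
    have hk1nn : (0:ℤ) ≤ (k1 : ℤ) := Int.ofNat_nonneg _
    have hl1 : (1:ℤ) ≤ (l : ℤ) := by omega
    have h1 : (k1:ℤ) * 1 ≤ (k1:ℤ) * l := mul_le_mul_of_nonneg_left hl1 hk1nn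
    have h2 : ((k1:ℤ) * l) * 1 ≤ ((k1:ℤ) * l) * A.card :=
      mul_le_mul_of_nonneg_left hcard (by nlinarith)
    nlinarith
  classical
  let K := Nat.find hexists
  have hK : N < Fsum l (s0 + K) A := Nat.find_spec hexists
  have hK0 : K ≠ 0 := by
    intro h
    rw [h] at hK
    simp at hK
    omega
  have hKpred : ¬ N < Fsum l (s0 + (K - 1 : ℕ)) A := Nat.find_min hexists (by omega)
  push_neg at hKpred
  refine ⟨s0 + (K - 1 : ℕ), ?_⟩
  have hsucc : s0 + (K : ℕ) = (s0 + (K - 1 : ℕ)) + 1 := by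
    have : (K : ℤ) = ((K - 1 : ℕ) : ℤ) + 1 := by omega
    rw [this]; ring
  rw [hsucc] at hK
  have hstep := Fsum_step l (s0 + (K - 1 : ℕ)) A
  -- N < Fsum (s+1) ≤ Fsum s + l, Fsum s ≤ N, l ∣ N - Fsum s
  have hdvd : (l : ℤ) ∣ (N - Fsum l (s0 + (K - 1 : ℕ)) A) := by
    rw [← cast_eq_cast_iff_dvd]
    rw [hN, Fsum_cast]
  obtain ⟨k, hk⟩ := hdvd
  have hk1 : k < 1 := lt_of_mul_lt_mul_left (by linarith) hl0.le
  have hk2 : -1 < k := lt_of_mul_lt_mul_left (by linarith) hl0.le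
  have : k = 0 := by omega
  rw [this, mul_zero] at hk
  omega

end Fsum

section Enum

lemma strictMono_gap {n : ℕ} {f : Fin n → ℤ} (hf : StrictMono f) {i j : Fin n} (h : i ≤ j) :
    ((j : ℕ) : ℤ) - ((i : ℕ) : ℤ) ≤ f j - f i := by
  cases n with
  | zero => exact absurd i.2 (by omega)
  | succ m =>
    have hg : Monotone (fun i : Fin (m+1) => f i - ((i : ℕ) : ℤ)) := by
      rw [Fin.monotone_iff_le_succ]
      intro k
      have h1 : f k.castSucc < f k.succ := hf Fin.castSucc_lt_succ
      simp only [Fin.coe_castSucc, Fin.val_succ]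
      push_cast
      omega
    have := hg h
    simp only at this
    omega

lemma sum_orderEmbOfFin {L : Finset ℤ} {n : ℕ} (h : L.card = n) :
    ∑ i : Fin n, L.orderEmbOfFin h i = ∑ t ∈ L, t := by
  refine Finset.sum_bij (fun i _ => L.orderEmbOfFin h i) (fun i _ => L.orderEmbOfFin_mem h i)
    (fun i _ j _ hij => (L.orderEmbOfFin h).injective hij) ?_ (fun i _ => rfl)
  intro t ht
  have : t ∈ Set.range (L.orderEmbOfFin h) := by rw [Finset.range_orderEmbOfFin]; exact ht
  obtain ⟨i, hi⟩ := this
  exact ⟨i, Finset.mem_univ i, hi⟩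

end Enum

section Main

/-- `0 + 1 + ⋯ + (n-1)` as an integer. -/
def Nsum (n : ℕ) : ℤ := ∑ i : Fin n, ((i : ℕ) : ℤ)

/-- The strictly decreasing vector associated to `x`. -/
def wvec (n : ℕ) (x : Fin n → ℤ) (i : Fin n) : ℤ := x i + ((n : ℤ) - 1 - ((i : ℕ) : ℤ))

def alcoveSet (n l : ℕ) : Set (Fin n → ℤ) :=
  {x : Fin n → ℤ |
        (∑ i, x i = 0) ∧
        (∀ i j : Fin n, i ≤ j → x j ≤ x i) ∧
        (∀ i j : Fin n, x i - x j ≤ (l : ℤ) - n)}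

def Phi (n l : ℕ) [NeZero l] (x : Fin n → ℤ) : Finset (ZMod l) :=
  Finset.univ.image fun i => ((wvec n x i : ℤ) : ZMod l)

def TSet (n l : ℕ) [NeZero l] : Finset (Finset (ZMod l)) :=
  Finset.univ.filter fun A => A.card = n ∧ ∑ r ∈ A, r = ((Nsum n : ℤ) : ZMod l)

lemma sum_const_part (n : ℕ) : ∑ i : Fin n, ((n : ℤ) - 1 - ((i : ℕ) : ℤ)) = Nsum n := by
  unfold Nsum
  refine Fintype.sum_equiv Fin.revPerm _ _ ?_
  intro i
  have h1 : (Fin.revPerm i : Fin n) = Fin.rev i := rfl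
  rw [h1]
  have h2 : ((Fin.rev i : ℕ) : ℤ) = (n : ℤ) - 1 - ((i : ℕ) : ℤ) := by
    have := i.2
    simp only [Fin.val_rev]
    push_cast
    omega
  rw [h2]

lemma sum_wvec {n l : ℕ} {x : Fin n → ℤ} (hx : x ∈ alcoveSet n l) :
    ∑ i, wvec n x i = Nsum n := by
  unfold wvec
  rw [Finset.sum_add_distrib, hx.1, sum_const_part, zero_add]

/-- gaps of `wvec` for alcove points -/
lemma wvec_gap {n l : ℕ} {x : Fin n → ℤ} (hx : x ∈ alcoveSet n l) {i j : Fin n} (h : i ≤ j) :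
    ((j : ℕ) : ℤ) - ((i : ℕ) : ℤ) ≤ wvec n x i - wvec n x j := by
  have := hx.2.1 i j h
  unfold wvec
  omega

lemma wvec_spread {n l : ℕ} (hn : 1 ≤ n) {x : Fin n → ℤ} (hx : x ∈ alcoveSet n l)
    (i j : Fin n) : wvec n x i - wvec n x j ≤ (l : ℤ) - 1 := by
  have h1 := hx.2.2 i j
  have h2 := i.2
  have h3 := j.2
  have h4 : (0:ℕ) < n := hn
  unfold wvec
  have hi : ((i : ℕ) : ℤ) ≤ (n : ℤ) - 1 := by push_cast; omega
  have hj : (0:ℤ) ≤ ((j : ℕ) : ℤ) := by positivity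
  omega

lemma wvec_inj {n l : ℕ} [NeZero l] (hn : 1 ≤ n) (hnl : n + 1 ≤ l) {x : Fin n → ℤ}
    (hx : x ∈ alcoveSet n l) :
    Function.Injective fun i => ((wvec n x i : ℤ) : ZMod l) := by
  intro i j hij
  by_contra hne
  simp only at hij
  obtain ⟨k, hk⟩ := (cast_eq_cast_iff_dvd l _ _).1 hij
  rcases lt_or_gt_of_ne hne with hlt | hlt
  · have hgap := wvec_gap hx hlt.le
    have hsp := wvec_spread hn hx i j
    have hij' : ((i : ℕ) : ℤ) < ((j : ℕ) : ℤ) := by exact_mod_cast hlt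
    have hl0 : 0 < (l : ℤ) := by exact_mod_cast Nat.pos_of_ne_zero (NeZero.ne l)
    have hk1 : k < 1 := lt_of_mul_lt_mul_left (by omega) hl0.le
    have hk2 : 0 < k := lt_of_mul_lt_mul_left (by omega) hl0.le
    omega
  · have hgap := wvec_gap hx hlt.le
    have hsp := wvec_spread hn hx j i
    have hij' : ((j : ℕ) : ℤ) < ((i : ℕ) : ℤ) := by exact_mod_cast hlt
    have hl0 : 0 < (l : ℤ) := by exact_mod_cast Nat.pos_of_ne_zero (NeZero.ne l)
    have hk1 : k > -1 := by
      have := lt_of_mul_lt_mul_left (a := (l:ℤ)) (b := (-1 : ℤ)) (c := k) (by omega) hl0.le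
      omega
    have hk2 : k < 0 := by
      have := lt_of_mul_lt_mul_left (a := (l:ℤ)) (b := k) (c := (0:ℤ)) (by omega) hl0.le
      omega
    omega

lemma Phi_mapsTo {n l : ℕ} [NeZero l] (hn : 1 ≤ n) (hnl : n + 1 ≤ l) {x : Fin n → ℤ}
    (hx : x ∈ alcoveSet n l) : Phi n l x ∈ TSet n l := by
  have hinj := wvec_inj hn hnl hx
  rw [TSet, Finset.mem_filter]
  refine ⟨Finset.mem_univ _, ?_, ?_⟩
  · rw [Phi, Finset.card_image_of_injective _ hinj, Finset.card_univ, Fintype.card_fin]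
  · rw [Phi, Finset.sum_image (fun i _ j _ h => hinj h)]
    rw [← sum_wvec hx]
    push_cast
    rfl

end Main

section Inj

lemma Fsum_jump_lemma {l : ℕ} [NeZero l] {s s' : ℤ} (h : s < s') {A : Finset (ZMod l)}
    (hs : ((s : ℤ) : ZMod l) ∈ A) : Fsum l s A + l ≤ Fsum l s' A := by
  have hl0 : 0 < (l : ℤ) := by exact_mod_cast Nat.pos_of_ne_zero (NeZero.ne l)
  have key : ∀ r ∈ A, zlift l s r + (if r = ((s : ℤ) : ZMod l) then (l:ℤ) else 0) ≤ zlift l s' r := by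
    intro r _
    split_ifs with hr
    · have hz : zlift l s r = s := by rw [hr]; exact zlift_unique l le_rfl (by omega) rfl
      have := zlift_jump l (s := s) (s' := s') (r := r) (by omega)
      omega
    · simpa using zlift_mono l h.le r
  calc Fsum l s A + l
      = ∑ r ∈ A, (zlift l s r + if r = ((s : ℤ) : ZMod l) then (l:ℤ) else 0) := by
        rw [Finset.sum_add_distrib, Finset.sum_ite_eq' A _ (fun _ => (l:ℤ)), if_pos hs]
        rfl
    _ ≤ Fsum l s' A := Finset.sum_le_sum key

lemma zlift_wvec {n l : ℕ} [NeZero l] (hn : 1 ≤ n) (hnl : n + 1 ≤ l) {x : Fin n → ℤ}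
    (hx : x ∈ alcoveSet n l) (i : Fin n) :
    zlift l (wvec n x ⟨n - 1, by omega⟩) ((wvec n x i : ℤ) : ZMod l) = wvec n x i := by
  set last : Fin n := ⟨n - 1, by omega⟩ with hlast
  have hle : i ≤ last := by
    rw [Fin.le_def]
    have := i.2
    simp [hlast]
    omega
  have h1 := wvec_gap hx hle
  have h2 := wvec_spread hn hx i last
  apply zlift_unique
  · have : (0:ℤ) ≤ ((last : ℕ) : ℤ) - ((i : ℕ) : ℤ) := by
      have := i.2; simp [hlast]; push_cast; omega
    omega
  · omega
  · rfl

lemma Fsum_of_alcove {n l : ℕ} [NeZero l] (hn : 1 ≤ n) (hnl : n + 1 ≤ l) {x : Fin n → ℤ}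
    (hx : x ∈ alcoveSet n l) :
    Fsum l (wvec n x ⟨n - 1, by omega⟩) (Phi n l x) = Nsum n := by
  have hinj := wvec_inj hn hnl hx
  rw [Fsum, Phi, Finset.sum_image (fun i _ j _ h => hinj h)]
  rw [Finset.sum_congr rfl (fun i _ => zlift_wvec hn hnl hx i)]
  exact sum_wvec hx

lemma Phi_injOn {n l : ℕ} [NeZero l] (hn : 1 ≤ n) (hnl : n + 1 ≤ l) :
    Set.InjOn (Phi n l) (alcoveSet n l) := by
  have hl0 : 0 < (l : ℤ) := by exact_mod_cast Nat.pos_of_ne_zero (NeZero.ne l)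
  intro x hx y hy hxy
  set last : Fin n := ⟨n - 1, by omega⟩ with hlast
  set s := wvec n x last with hs
  set s' := wvec n y last with hs'
  have hFx : Fsum l s (Phi n l x) = Nsum n := Fsum_of_alcove hn hnl hx
  have hFy : Fsum l s' (Phi n l x) = Nsum n := by rw [hxy]; exact Fsum_of_alcove hn hnl hy
  have hsmem : ((s : ℤ) : ZMod l) ∈ Phi n l x :=
    Finset.mem_image.2 ⟨last, Finset.mem_univ _, rfl⟩
  have hs'mem : ((s' : ℤ) : ZMod l) ∈ Phi n l x := by
    rw [hxy]; exact Finset.mem_image.2 ⟨last, Finset.mem_univ _, rfl⟩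
  have hss' : s = s' := by
    by_contra hne
    rcases lt_or_gt_of_ne hne with hlt | hlt
    · have := Fsum_jump_lemma hlt hsmem
      omega
    · have := Fsum_jump_lemma hlt hs'mem
      omega
  -- both wvec's are the decreasing enumeration of the same lift set
  have hcardA : (Phi n l x).card = n := by
    rw [Phi, Finset.card_image_of_injective _ (wvec_inj hn hnl hx), Finset.card_univ,
      Fintype.card_fin]
  set L : Finset ℤ := (Phi n l x).image (zlift l s) with hL
  have hLcard : L.card = n := by
    rw [hL, Finset.card_image_of_injOn, hcardA]
    intro a _ b _ hab
    have := congrArg (fun t : ℤ => ((t : ℤ) : ZMod l)) hab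
    simpa [zlift_cast] using this
  have key : ∀ z : Fin n → ℤ, z ∈ alcoveSet n l → Phi n l z = Phi n l x →
      wvec n z last = s → (fun i => wvec n z (Fin.rev i)) = L.orderEmbOfFin hLcard := by
    intro z hz hPhi hzs
    apply Finset.orderEmbOfFin_unique
    · intro i
      rw [Finset.mem_image]
      refine ⟨((wvec n z (Fin.rev i) : ℤ) : ZMod l), ?_, ?_⟩
      · rw [← hPhi]; exact Finset.mem_image.2 ⟨Fin.rev i, Finset.mem_univ _, rfl⟩
      · rw [← hzs]; exact zlift_wvec hn hnl hz (Fin.rev i)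
    · intro i j hij
      have hrev : Fin.rev j < Fin.rev i := by
        rw [Fin.rev_lt_rev]; exact hij
      have h1 := wvec_gap hz hrev.le
      have h2 : ((Fin.rev j : ℕ) : ℤ) < ((Fin.rev i : ℕ) : ℤ) := by exact_mod_cast hrev
      show wvec n z (Fin.rev i) < wvec n z (Fin.rev j)
      omega
  have h1 := key x hx rfl rfl
  have h2 := key y hy hxy.symm hss'.symm
  funext i
  have h3 : wvec n x i = wvec n y i := by
    have := congrFun (h1.trans h2.symm) (Fin.rev i)
    simpa [Fin.rev_rev] using this
  rw [wvec, wvec] at h3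
  omega

end Inj

section Surj

lemma Phi_surjOn {n l : ℕ} [NeZero l] (hn : 1 ≤ n) (hnl : n + 1 ≤ l) :
    Set.SurjOn (Phi n l) (alcoveSet n l) ↑(TSet n l) := by
  have hl0 : 0 < (l : ℤ) := by exact_mod_cast Nat.pos_of_ne_zero (NeZero.ne l)
  intro A hA
  rw [Finset.mem_coe, TSet, Finset.mem_filter] at hA
  obtain ⟨-, hcard, hsum⟩ := hA
  obtain ⟨s, hsF⟩ := exists_Fsum_eq l (by rw [hcard]; omega) hsum.symm
  have hzinj : Set.InjOn (zlift l s) ↑A := by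
    intro a _ b _ hab
    have := congrArg (fun t : ℤ => ((t : ℤ) : ZMod l)) hab
    simpa [zlift_cast] using this
  set L : Finset ℤ := A.image (zlift l s) with hLdef
  have hLcard : L.card = n := by rw [hLdef, Finset.card_image_of_injOn hzinj, hcard]
  have hLmem : ∀ t ∈ L, s ≤ t ∧ t < s + l ∧ ((t : ℤ) : ZMod l) ∈ A := by
    intro t ht
    rw [hLdef, Finset.mem_image] at ht
    obtain ⟨r, hr, hrt⟩ := ht
    refine ⟨hrt ▸ zlift_le l s r, hrt ▸ zlift_lt l s r, ?_⟩
    rw [← hrt, zlift_cast]; exact hr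
  set w : Fin n → ℤ := fun i => L.orderEmbOfFin hLcard (Fin.rev i) with hwdef
  have hwmem : ∀ i, w i ∈ L := fun i => L.orderEmbOfFin_mem hLcard (Fin.rev i)
  have hgap : ∀ i j : Fin n, i ≤ j → ((j : ℕ) : ℤ) - ((i : ℕ) : ℤ) ≤ w i - w j := by
    intro i j hij
    have hrev : Fin.rev j ≤ Fin.rev i := Fin.rev_le_rev.2 hij
    have := strictMono_gap (L.orderEmbOfFin hLcard).strictMono hrev
    have hvi : ((Fin.rev i : ℕ) : ℤ) = (n : ℤ) - 1 - ((i : ℕ) : ℤ) := by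
      have := i.2; simp only [Fin.val_rev]; push_cast; omega
    have hvj : ((Fin.rev j : ℕ) : ℤ) = (n : ℤ) - 1 - ((j : ℕ) : ℤ) := by
      have := j.2; simp only [Fin.val_rev]; push_cast; omega
    rw [hvi, hvj] at this
    simp only [hwdef]
    omega
  have hwsum : ∑ i, w i = Nsum n := by
    have h1 : ∑ i : Fin n, w i = ∑ i : Fin n, L.orderEmbOfFin hLcard i := by
      refine Fintype.sum_equiv Fin.revPerm _ _ fun i => rfl
    rw [h1, sum_orderEmbOfFin, hLdef, Finset.sum_image (fun a ha b hb h => hzinj ha hb h)]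
    exact hsF
  set x : Fin n → ℤ := fun i => w i - ((n : ℤ) - 1 - ((i : ℕ) : ℤ)) with hxdef
  have hwx : ∀ i, wvec n x i = w i := by intro i; simp only [wvec, hxdef]; ring
  have hxmem : x ∈ alcoveSet n l := by
    refine ⟨?_, ?_, ?_⟩
    · simp only [hxdef]
      rw [Finset.sum_sub_distrib, hwsum, sum_const_part, sub_self]
    · intro i j hij
      have := hgap i j hij
      simp only [hxdef]
      omega
    · intro i j
      set z0 : Fin n := ⟨0, by omega⟩ with hz0
      set z1 : Fin n := ⟨n - 1, by omega⟩ with hz1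
      have hz0v : ((z0 : ℕ) : ℤ) = 0 := by simp [hz0]
      have hz1v : ((z1 : ℕ) : ℤ) = (n : ℤ) - 1 := by
        simp only [hz1]
        push_cast
        omega
      have h1 : x i ≤ x z0 := by
        have := hgap z0 i (by rw [Fin.le_def]; simp [hz0])
        rw [hz0v] at this
        simp only [hxdef, hz0v]
        omega
      have h2 : x z1 ≤ x j := by
        have := hgap j z1 (by rw [Fin.le_def]; have := j.2; simp [hz1]; omega)
        rw [hz1v] at this
        simp only [hxdef, hz1v]
        omega
      have h3 := (hLmem _ (hwmem z0)).1
      have h4 := (hLmem _ (hwmem z0)).2.1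
      have h5 := (hLmem _ (hwmem z1)).1
      have h6 := (hLmem _ (hwmem z1)).2.1
      have h7 : x z0 - x z1 ≤ (l : ℤ) - n := by
        simp only [hxdef, hz0v, hz1v]
        omega
      omega
  refine ⟨x, hxmem, ?_⟩
  -- Phi x = A
  rw [Phi]
  apply Finset.ext
  intro r
  rw [Finset.mem_image]
  constructor
  · rintro ⟨i, -, hi⟩
    rw [← hi, hwx i]
    exact (hLmem _ (hwmem i)).2.2
  · intro hr
    have hzl : zlift l s r ∈ L := Finset.mem_image_of_mem _ hr
    have : zlift l s r ∈ Set.range (L.orderEmbOfFin hLcard) := by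
      rw [Finset.range_orderEmbOfFin]; exact hzl
    obtain ⟨i0, hi0⟩ := this
    refine ⟨Fin.rev i0, Finset.mem_univ _, ?_⟩
    rw [hwx (Fin.rev i0)]
    have : w (Fin.rev i0) = zlift l s r := by
      simp only [hwdef, Fin.rev_rev]
      exact hi0
    rw [this, zlift_cast]

end Surj

section Count

lemma TSet_card {n l : ℕ} [NeZero l] (hcop : Nat.Coprime l n) :
    (TSet n l).card * l = l.choose n := by
  classical
  set u : (ZMod l)ˣ := ZMod.unitOfCoprime n hcop.symm with hu
  have hucoe : (u : ZMod l) = (n : ZMod l) := ZMod.coe_unitOfCoprime n hcop.symm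
  set c : ZMod l := ((Nsum n : ℤ) : ZMod l) with hc
  set kB : Finset (ZMod l) → ZMod l := fun B => ((∑ b ∈ B, b) - c) * (u⁻¹ : (ZMod l)ˣ) with hkB
  have hsum_image : ∀ (A : Finset (ZMod l)) (k : ZMod l),
      ∑ b ∈ A.image (fun a => a + k), b = (∑ a ∈ A, a) + A.card • k := by
    intro A k
    rw [Finset.sum_image (fun a _ b _ h => by exact add_right_cancel h)]
    rw [Finset.sum_add_distrib, Finset.sum_const]
  have hcard_image : ∀ (A : Finset (ZMod l)) (k : ZMod l),
      (A.image (fun a => a + k)).card = A.card :=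
    fun A k => Finset.card_image_of_injective _ (fun a b h => by exact add_right_cancel h)
  have hkey : ((TSet n l) ×ˢ (Finset.univ : Finset (ZMod l))).card
      = (Finset.powersetCard n (Finset.univ : Finset (ZMod l))).card := by
    refine Finset.card_nbij' (fun p => p.1.image (fun a => a + p.2))
      (fun B => (B.image (fun b => b + (- kB B)), kB B)) ?_ ?_ ?_ ?_
    · rintro ⟨A, k⟩ hp
      rw [Finset.mem_coe, Finset.mem_product] at hp
      rw [TSet, Finset.mem_filter] at hp
      rw [Finset.mem_coe, Finset.mem_powersetCard]
      exact ⟨Finset.subset_univ _, by rw [hcard_image, hp.1.2.1]⟩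
    · intro B hB
      rw [Finset.mem_coe, Finset.mem_powersetCard] at hB
      rw [Finset.mem_coe, Finset.mem_product, TSet, Finset.mem_filter]
      refine ⟨⟨Finset.mem_univ _, ?_, ?_⟩, Finset.mem_univ _⟩
      · rw [hcard_image, hB.2]
      · rw [hsum_image, hB.2, ← hc]
        rw [nsmul_eq_mul]
        push_cast
        rw [← hucoe, hkB]
        simp only
        rw [mul_neg, mul_comm (u : ZMod l) _, mul_assoc]
        rw [Units.inv_mul, mul_one]
        ring
    · rintro ⟨A, k⟩ hp
      rw [Finset.mem_coe, Finset.mem_product] at hp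
      rw [TSet, Finset.mem_filter] at hp
      have hk : kB (A.image (fun a => a + k)) = k := by
        rw [hkB]
        simp only
        rw [hsum_image, hp.1.2.2, ← hc, nsmul_eq_mul]
        rw [hp.1.2.1, ← hucoe]
        rw [add_sub_cancel_left, mul_comm (u : ZMod l) k]
        exact Units.mul_inv_cancel_right k u
      simp only
      rw [hk, Finset.image_image]
      have hcomp : ((fun a => a + (-k)) ∘ (fun a => a + k)) = id := by
        funext a; simp
      rw [hcomp, Finset.image_id]
    · intro B hB
      simp only
      rw [Finset.image_image]
      have : ((fun a => a + kB B) ∘ (fun b => b + (- kB B))) = id := by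
        funext a; simp
      rw [this, Finset.image_id]
  rw [Finset.card_product, Finset.card_univ, ZMod.card] at hkey
  rw [Finset.card_powersetCard, Finset.card_univ, ZMod.card] at hkey
  exact hkey

end Count




/-- The number of weights `μ` in the root lattice of `sl_n` that are
dominant and lie in the open `l`-dilated fundamental alcove, i.e. dominant integral
weights in the root lattice with `⟨μ + ρ, θ∨⟩ < l` (equivalently `⟨μ, θ∨⟩ ≤ l − n`, since
`⟨ρ, θ∨⟩ = n − 1`), equals the rational Catalan number `c_{l−n,n} = (1/l)·C(l,n)`, for
`l ≥ n + 1` coprime to `n`.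

We use the standard model: weights of `sl_n` are vectors `x ∈ ℤⁿ` with `∑ xᵢ = 0` (the
root lattice), dominance means `x₀ ≥ x₁ ≥ ⋯ ≥ x_{n−1}`, and the pairing with the highest
coroot is `⟨x, θ∨⟩ = max xᵢ − min xⱼ`, so the alcove condition reads
`xᵢ − xⱼ ≤ l − n` for all `i, j`.  The identity is stated multiplied through by `l`. -/
theorem alcove_root_lattice_count
    (n l : ℕ) (hn : 1 ≤ n) (hl : n + 1 ≤ l) (hcop : Nat.Coprime l n) :
    Set.ncard {x : Fin n → ℤ |
        (∑ i, x i = 0) ∧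
        (∀ i j : Fin n, i ≤ j → x j ≤ x i) ∧
        (∀ i j : Fin n, x i - x j ≤ (l : ℤ) - n)} * l
      = l.choose n := by
  haveI : NeZero l := ⟨by omega⟩
  have hbij : Set.BijOn (Phi n l) (alcoveSet n l) ↑(TSet n l) :=
    ⟨fun x hx => Finset.mem_coe.2 (Phi_mapsTo hn hl hx), Phi_injOn hn hl, Phi_surjOn hn hl⟩
  have h1 : (alcoveSet n l).ncard = (TSet n l).card := by
    calc (alcoveSet n l).ncard
        = (Phi n l '' alcoveSet n l).ncard := (Set.ncard_image_of_injOn hbij.injOn).symm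
      _ = (TSet n l).card := by rw [hbij.image_eq, Set.ncard_coe_finset]
  show (alcoveSet n l).ncard * l = l.choose n
  rw [h1]
  exact TSet_card hcop
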